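/- Let φ be a Busemann cocycle on a hyperbolic graph associated to a geodesic ray ρ, i.e., φ(w,v) = h_ρ(v) − h_ρ(w) where h_ρ(v) = lim_{n→∞}(dist(v, ρ(n)) − n). Then every gradient line of φ (a sequence of vertices (v_n) with φ(v_{n+1}, v_n) = 1 for all n) is the vertex sequence of a geodesic ray asymptotic to ρ, and there is a gradient line starting from every vertex. -/

import Mathlib

/-- A graph is fine if for every `L` and every edge `e`, there are only finitely many
circuits (cycles) of length at most `L` containing `e`. -/
def Fine {V : Type*} (G : SimpleGraph V) : Prop :=
  ∀ (L : ℕ) (x y : V), G.Adj x y →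
    {p : G.Walk x x | p.IsCycle ∧ s(x, y) ∈ p.edges ∧ p.length ≤ L}.Finite

/-- A graph is `δ`-hyperbolic: geodesic triangles are `δ`-thin. -/
def HypGraph {V : Type*} (G : SimpleGraph V) (δ : ℕ) : Prop :=
  ∀ {x y z : V} (p : G.Walk x y) (q : G.Walk y z) (r : G.Walk x z),
    p.length = G.dist x y → q.length = G.dist y z → r.length = G.dist x z →
    ∀ w ∈ r.support, ∃ u, (u ∈ p.support ∨ u ∈ q.support) ∧ G.dist w u ≤ δ

/-- A geodesic ray in a graph: consecutive vertices are adjacent and the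
parametrisation is isometric. -/
def GeodRay {V : Type*} (G : SimpleGraph V) (ρ : ℕ → V) : Prop :=
  (∀ k, G.Adj (ρ k) (ρ (k + 1))) ∧ ∀ m n : ℕ, m ≤ n → G.dist (ρ m) (ρ n) = n - m

/-- Twice the Gromov product `(x·y)_o`. -/
noncomputable def gp2 {V : Type*} (G : SimpleGraph V) (o x y : V) : ℤ :=
  (G.dist o x : ℤ) + G.dist o y - G.dist x y

/-- A sequence of vertices converges to a point of the Gromov boundary if its Gromov
products tend to infinity. -/
def ConvInf {V : Type*} (G : SimpleGraph V) (o : V) (u : ℕ → V) : Prop :=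
  ∀ N : ℤ, ∃ M : ℕ, ∀ i j, M ≤ i → M ≤ j → N ≤ gp2 G o (u i) (u j)

/-- Two sequences converge to the same boundary point: mixed Gromov products tend to
infinity. -/
def SameBdry {V : Type*} (G : SimpleGraph V) (o : V) (u w : ℕ → V) : Prop :=
  ∀ N : ℤ, ∃ M : ℕ, ∀ i j, M ≤ i → M ≤ j → N ≤ gp2 G o (u i) (w j)

/-- Walks along a sequence of consecutively adjacent vertices. -/
lemma walk_along {V : Type*} {G : SimpleGraph V} (l : ℕ → V)
    (hl : ∀ n, G.Adj (l n) (l (n + 1))) (a b : ℕ) (hab : a ≤ b) :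
    ∃ p : G.Walk (l a) (l b), p.length = b - a ∧
      ∀ v ∈ p.support, ∃ k, a ≤ k ∧ k ≤ b ∧ v = l k := by
  induction b, hab using Nat.le_induction with
  | base =>
    refine ⟨SimpleGraph.Walk.nil, by simp, ?_⟩
    intro v hv
    simp only [SimpleGraph.Walk.support_nil, List.mem_singleton] at hv
    exact ⟨a, le_refl a, le_refl a, hv⟩
  | succ b hab ih =>
    obtain ⟨p, hp1, hp2⟩ := ih
    refine ⟨p.concat (hl b), ?_, ?_⟩
    · rw [SimpleGraph.Walk.length_concat]; omega
    · intro v hv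
      rw [SimpleGraph.Walk.support_concat, List.mem_append] at hv
      rcases hv with hv | hv
      · obtain ⟨k, hk1, hk2, hk3⟩ := hp2 v hv
        exact ⟨k, hk1, by omega, hk3⟩
      · simp only [List.mem_singleton] at hv
        exact ⟨b + 1, by omega, le_refl _, hv⟩

/-- Gradient lines of a Busemann cocycle are geodesic rays asymptotic to the defining
ray `ρ`, and there is a gradient line starting from every vertex.  Here `h` is the
Busemann function of `ρ`, `φ(w,v) = h(v) - h(w)`, and a gradient line is a sequence
of consecutive adjacent vertices with `φ(v_{n+1}, v_n) = 1`.  The graph is fine,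
`δ`-hyperbolic, connected, and has the visibility property. -/
theorem stmt9 {V : Type*} (G : SimpleGraph V) (δ : ℕ) (hcon : G.Connected)
    (hfine : Fine G) (hhyp : HypGraph G δ)
    (hvis : ∀ (o : V) (u : ℕ → V), ConvInf G o u →
      ∃ ρ : ℕ → V, GeodRay G ρ ∧ ρ 0 = o ∧ SameBdry G o ρ u)
    (ρ : ℕ → V) (hρ : GeodRay G ρ) (h : V → ℤ)
    (hBus : ∀ v : V, Filter.Tendsto (fun n : ℕ => (G.dist v (ρ n) : ℤ) - n)
      Filter.atTop (nhds (h v))) :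
    (∀ l : ℕ → V, (∀ n, G.Adj (l n) (l (n + 1))) →
      (∀ n, h (l n) - h (l (n + 1)) = 1) →
      GeodRay G l ∧ ∃ C : ℕ, ∀ n, ∃ m, G.dist (l n) (ρ m) ≤ C) ∧
    (∀ v : V, ∃ l : ℕ → V, l 0 = v ∧ (∀ n, G.Adj (l n) (l (n + 1))) ∧
      ∀ n, h (l n) - h (l (n + 1)) = 1) := by
  classical
  -- eventual exactness of the Busemann function
  have hev : ∀ v : V, ∃ N : ℕ, ∀ n, N ≤ n → (G.dist v (ρ n) : ℤ) = h v + n := by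
    intro v
    have hb := hBus v
    rw [nhds_discrete, Filter.tendsto_pure, Filter.eventually_atTop] at hb
    obtain ⟨N, hN⟩ := hb
    exact ⟨N, fun n hn => by have := hN n hn; omega⟩
  -- `h` is 1-Lipschitz
  have hLip : ∀ x y : V, h x - h y ≤ G.dist x y := by
    intro x y
    obtain ⟨Nx, hNx⟩ := hev x
    obtain ⟨Ny, hNy⟩ := hev y
    have h1 := hNx (max Nx Ny) (le_max_left _ _)
    have h2 := hNy (max Nx Ny) (le_max_right _ _)
    have h3 : G.dist x (ρ (max Nx Ny)) ≤ G.dist x y + G.dist y (ρ (max Nx Ny)) :=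
      hcon.dist_triangle
    omega
  constructor
  · -- gradient lines are geodesic rays tracking ρ
    intro l hadj hgrad
    have hval : ∀ n : ℕ, h (l n) = h (l 0) - n := by
      intro n
      induction n with
      | zero => simp
      | succ n ih => have := hgrad n; push_cast; omega
    have hgeo : GeodRay G l := by
      refine ⟨hadj, fun m n hmn => ?_⟩
      obtain ⟨p, hp1, -⟩ := walk_along l hadj m n hmn
      have hle : G.dist (l m) (l n) ≤ n - m := hp1 ▸ SimpleGraph.dist_le p
      have hge : h (l m) - h (l n) ≤ G.dist (l m) (l n) := hLip _ _
      have h1 := hval m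
      have h2 := hval n
      omega
    refine ⟨hgeo, δ + G.dist (l 0) (ρ 0), fun n => ?_⟩
    obtain ⟨N0, hN0⟩ := hev (l 0)
    obtain ⟨Nn, hNn⟩ := hev (l n)
    set m := max N0 Nn with hm
    have d0 : (G.dist (l 0) (ρ m) : ℤ) = h (l 0) + m := hN0 m (le_max_left _ _)
    have dn : (G.dist (l n) (ρ m) : ℤ) = h (l n) + m := hNn m (le_max_right _ _)
    have dln : G.dist (l 0) (l n) = n := by
      have := hgeo.2 0 n (Nat.zero_le n); omega
    have hvn := hval n
    -- geodesic from l 0 through l n to ρ m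
    obtain ⟨p₁, hp₁, -⟩ := walk_along l hadj 0 n (Nat.zero_le n)
    obtain ⟨p₂, hp₂⟩ := hcon.exists_walk_length_eq_dist (l n) (ρ m)
    obtain ⟨q, hq1, hq2⟩ := walk_along ρ hρ.1 0 m (Nat.zero_le m)
    obtain ⟨p, hp⟩ := hcon.exists_walk_length_eq_dist (l 0) (ρ 0)
    have hr : (p₁.append p₂).length = G.dist (l 0) (ρ m) := by
      rw [SimpleGraph.Walk.length_append, hp₂, hp₁]
      omega
    have hqd : q.length = G.dist (ρ 0) (ρ m) := by
      rw [hρ.2 0 m (Nat.zero_le m), hq1]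
    have hmem : l n ∈ (p₁.append p₂).support :=
      SimpleGraph.Walk.subset_support_append_left p₁ p₂ p₁.end_mem_support
    obtain ⟨u, hu, hdu⟩ := hhyp p q (p₁.append p₂) hp hqd hr (l n) hmem
    rcases hu with hu | hu
    · refine ⟨0, ?_⟩
      have h1 : G.dist (l n) (ρ 0) ≤ G.dist (l n) u + G.dist u (ρ 0) := hcon.dist_triangle
      have h2 : G.dist u (ρ 0) ≤ (p.dropUntil u hu).length := SimpleGraph.dist_le _
      have h3 : (p.dropUntil u hu).length ≤ p.length := SimpleGraph.Walk.length_dropUntil_le p hu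
      omega
    · obtain ⟨k, -, -, rfl⟩ := hq2 u hu
      exact ⟨k, by omega⟩
  · -- existence of gradient lines
    have hstep : ∀ v : V, ∃ u, G.Adj v u ∧ h u = h v - 1 := by
      intro v
      obtain ⟨Nv, hNv⟩ := hev v
      set n := max Nv (1 - h v).toNat with hn
      have hn1 : (1 : ℤ) ≤ h v + n := by
        have h1 : (1 - h v : ℤ) ≤ ((1 - h v).toNat : ℤ) := Int.self_le_toNat _
        have h2 : ((1 - h v).toNat : ℤ) ≤ (n : ℤ) := by
          exact_mod_cast Nat.cast_le.mpr (le_max_right _ _)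
        omega
      have hd : (G.dist v (ρ n) : ℤ) = h v + n := hNv n (le_max_left _ _)
      have hdpos : G.dist v (ρ n) ≠ 0 := by omega
      obtain ⟨p, hp⟩ := SimpleGraph.exists_walk_of_dist_ne_zero hdpos
      have hne : v ≠ ρ n := by
        intro hvn
        rw [hvn, SimpleGraph.dist_self] at hdpos
        exact hdpos rfl
      obtain ⟨x, hxadj, q, rfl⟩ := SimpleGraph.Walk.exists_eq_cons_of_ne hne p
      refine ⟨x, hxadj, ?_⟩
      · 
        have hql : q.length + 1 = G.dist v (ρ n) := by
          simpa [SimpleGraph.Walk.length_cons] using hp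
        have hq : G.dist x (ρ n) ≤ q.length := SimpleGraph.dist_le q
        obtain ⟨Nx, hNx⟩ := hev x
        set k := max Nx n with hk
        have h1 := hNx k (le_max_left _ _)
        have h2 : G.dist x (ρ k) ≤ G.dist x (ρ n) + G.dist (ρ n) (ρ k) := hcon.dist_triangle
        have h3 : G.dist (ρ n) (ρ k) = k - n := hρ.2 n k (le_max_right _ _)
        have h4 : n ≤ k := le_max_right _ _
        have hge : h v - h x ≤ G.dist v x := hLip v x
        have h5 : G.dist v x = 1 := SimpleGraph.dist_eq_one_iff_adj.mpr hxadj
        omega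
    choose f hf1 hf2 using hstep
    intro v
    refine ⟨fun n => f^[n] v, rfl, fun n => ?_, fun n => ?_⟩
    · simp only [Function.iterate_succ_apply']; exact hf1 _
    · simp only [Function.iterate_succ_apply']; have := hf2 (f^[n] v); omega
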